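/- Let Φ ∈ ℝ^{n×p} have k-restricted isometry constant δ_k and (k,k)-restricted orthogonality constant θ_{k,k} with δ_k + θ_{k,k} < 1. Let β ∈ ℝᵖ be k-sparse, y = Φβ, and let β̂ be any minimizer of ‖γ‖₁ subject to Φγ = y. Then β̂ = β. -/

import Mathlib

noncomputable def l1 {m : ℕ} (v : Fin m → ℝ) : ℝ := ∑ i, |v i|

noncomputable def l2 {m : ℕ} (v : Fin m → ℝ) : ℝ := Real.sqrt (∑ i, (v i)^2)

def Sparse {m : ℕ} (k : ℕ) (v : Fin m → ℝ) : Prop :=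
  ∃ s : Finset (Fin m), s.card ≤ k ∧ ∀ i ∉ s, v i = 0

open Finset

lemma abs_add_mul_sign {t ε : ℝ} (ht : t ≠ 0) (hε : 0 ≤ ε) :
    |t + ε * Real.sign t| = |t| + ε := by
  rcases lt_or_gt_of_ne ht with h | h
  · rw [Real.sign_of_neg h, abs_of_neg h, abs_of_neg (by linarith)]; ring
  · rw [Real.sign_of_pos h, abs_of_pos h, abs_of_pos (by linarith)]; ring

lemma abs_sub_mul_sign {t ε : ℝ} (hε : 0 ≤ ε) (h : ε ≤ |t|) :
    |t - ε * Real.sign t| = |t| - ε := by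
  rcases lt_trichotomy t 0 with h1 | h1 | h1
  · rw [abs_of_neg h1] at h
    rw [Real.sign_of_neg h1, abs_of_neg h1, abs_of_nonpos (by linarith)]; ring
  · subst h1; simp at h; simp [le_antisymm h hε]
  · rw [abs_of_pos h1] at h
    rw [Real.sign_of_pos h1, abs_of_pos h1, abs_of_nonneg (by linarith)]; ring

lemma l2_le_of {p k : ℕ} {α : ℝ} (hα : 0 ≤ α) (x : Fin p → ℝ)
    (hinf : ∀ i, |x i| ≤ α) (h1 : (∑ i, |x i|) ≤ k * α) :
    l2 x ≤ Real.sqrt k * α := by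
  have h2 : ∑ i, (x i)^2 ≤ k * α^2 := by
    calc ∑ i, (x i)^2 ≤ ∑ i, α * |x i| := by
          refine Finset.sum_le_sum fun i _ => ?_
          have h3 := abs_nonneg (x i); have h4 := hinf i
          nlinarith [sq_abs (x i)]
      _ = α * ∑ i, |x i| := by rw [Finset.mul_sum]
      _ ≤ α * (k * α) := mul_le_mul_of_nonneg_left h1 hα
      _ = k * α^2 := by ring
  unfold l2
  calc Real.sqrt (∑ i, (x i)^2) ≤ Real.sqrt ((k : ℝ) * α^2) := Real.sqrt_le_sqrt h2
    _ = Real.sqrt k * α := by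
        rw [Real.sqrt_mul (by positivity), Real.sqrt_sq hα]

lemma l2_nonneg {p : ℕ} (x : Fin p → ℝ) : 0 ≤ l2 x := Real.sqrt_nonneg _

lemma dot_lin {n p : ℕ} (Φ : Matrix (Fin n) (Fin p) ℝ) (w : Fin n → ℝ) (a b : ℝ)
    (u v : Fin p → ℝ) :
    dotProduct (Φ.mulVec (a • u + b • v)) w =
      a * dotProduct (Φ.mulVec u) w + b * dotProduct (Φ.mulVec v) w := by
  rw [Matrix.mulVec_add, Matrix.mulVec_smul, Matrix.mulVec_smul, add_dotProduct,
    smul_dotProduct, smul_dotProduct, smul_eq_mul, smul_eq_mul]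

/-- Key polytope lemma: the linear functional `x ↦ -⟨Φx, Φx₀⟩` on the set
`{x : ‖x‖∞ ≤ α, ‖x‖₁ ≤ kα, x = 0 on T₀}` is bounded by `θ ‖x₀‖₂ √k α`. -/
lemma key_bound {n p k : ℕ} (Φ : Matrix (Fin n) (Fin p) ℝ) (θ : ℝ) (hθ0 : 0 ≤ θ)
    (hθ : ∀ c c' : Fin p → ℝ, Sparse k c → Sparse k c' → (∀ i, c i = 0 ∨ c' i = 0) →
      |dotProduct (Φ.mulVec c) (Φ.mulVec c')| ≤ θ * l2 c * l2 c')
    (x₀ : Fin p → ℝ) (T₀ : Finset (Fin p)) (hcard : T₀.card = k)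
    (hx₀ : ∀ i ∉ T₀, x₀ i = 0) (α : ℝ) (hα : 0 < α) :
    ∀ N : ℕ, ∀ x : Fin p → ℝ, (∀ i, |x i| ≤ α) → ((∑ i, |x i|) ≤ k * α) →
      (∀ i ∈ T₀, x i = 0) →
      ((Finset.univ.filter (fun i => 0 < |x i| ∧ |x i| < α)).card ≤ N) →
      -(dotProduct (Φ.mulVec x) (Φ.mulVec x₀)) ≤ θ * l2 x₀ * (Real.sqrt k * α) := by
  have hl2x₀ : 0 ≤ l2 x₀ := l2_nonneg x₀
  -- direct bound in the sparse case
  have direct : ∀ x : Fin p → ℝ, (∀ i, |x i| ≤ α) → ((∑ i, |x i|) ≤ k * α) →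
      (∀ i ∈ T₀, x i = 0) → ((Finset.univ.filter (fun i => x i ≠ 0)).card ≤ k) →
      -(dotProduct (Φ.mulVec x) (Φ.mulVec x₀)) ≤ θ * l2 x₀ * (Real.sqrt k * α) := by
    intro x hinf h1 hT hs
    have hsx : Sparse k x := ⟨_, hs, fun i hi => by simpa using hi⟩
    have hsx₀ : Sparse k x₀ := ⟨T₀, hcard.le, hx₀⟩
    have hdisj : ∀ i, x₀ i = 0 ∨ x i = 0 := fun i => by
      by_cases h : i ∈ T₀
      · exact Or.inr (hT i h)
      · exact Or.inl (hx₀ i h)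
    have hb := hθ x₀ x hsx₀ hsx hdisj
    have hstep : -(dotProduct (Φ.mulVec x) (Φ.mulVec x₀)) ≤
        |dotProduct (Φ.mulVec x₀) (Φ.mulVec x)| := by
      rw [dotProduct_comm]; exact neg_le_abs _
    calc -(dotProduct (Φ.mulVec x) (Φ.mulVec x₀)) ≤ θ * l2 x₀ * l2 x := hstep.trans hb
      _ ≤ θ * l2 x₀ * (Real.sqrt k * α) :=
        mul_le_mul_of_nonneg_left (l2_le_of hα.le x hinf h1) (by positivity)
  -- in the non-sparse case there are two "strict" coordinates
  have twostrict : ∀ x : Fin p → ℝ, (∀ i, |x i| ≤ α) → ((∑ i, |x i|) ≤ k * α) →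
      ¬ ((Finset.univ.filter (fun i => x i ≠ 0)).card ≤ k) →
      ∃ i j, i ≠ j ∧ (0 < |x i| ∧ |x i| < α) ∧ (0 < |x j| ∧ |x j| < α) := by
    intro x hinf h1 hs
    set F : Finset (Fin p) := Finset.univ.filter (fun i => |x i| = α) with hF
    set G : Finset (Fin p) := Finset.univ.filter (fun i => 0 < |x i| ∧ |x i| < α) with hG
    have hsub : (Finset.univ.filter (fun i => x i ≠ 0)) ⊆ F ∪ G := by
      intro i hi
      simp only [Finset.mem_filter, Finset.mem_univ, true_and] at hi
      have h2 : 0 < |x i| := abs_pos.mpr hi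
      rcases lt_or_eq_of_le (hinf i) with h3 | h3
      · exact Finset.mem_union_right _ (Finset.mem_filter.mpr ⟨Finset.mem_univ _, h2, h3⟩)
      · exact Finset.mem_union_left _ (Finset.mem_filter.mpr ⟨Finset.mem_univ _, h3⟩)
    have hFsum : ∑ i ∈ F, |x i| = F.card * α := by
      rw [Finset.sum_congr rfl (fun i hi => by
        simp only [hF, Finset.mem_filter] at hi; exact hi.2)]
      simp [mul_comm]
    have hFle : ∑ i ∈ F, |x i| ≤ ∑ i, |x i| :=
      Finset.sum_le_sum_of_subset_of_nonneg (Finset.subset_univ F)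
        (fun i _ _ => abs_nonneg _)
    have hFcard : (F.card : ℝ) ≤ k := by
      have := hFsum ▸ (hFle.trans h1)
      exact le_of_mul_le_mul_right this hα
    by_cases hG2 : 1 < G.card
    · obtain ⟨a, b, ha, hb, hab⟩ := Finset.one_lt_card_iff.mp hG2
      simp only [hG, Finset.mem_filter, Finset.mem_univ, true_and] at ha hb
      exact ⟨a, b, hab, ha, hb⟩
    · exfalso
      push_neg at hG2
      apply hs
      interval_cases hGc : G.card
      · -- G empty
        have hGe : G = ∅ := Finset.card_eq_zero.mp hGc
        have : (Finset.univ.filter (fun i => x i ≠ 0)).card ≤ F.card := by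
          apply Finset.card_le_card
          intro i hi
          have := hsub hi
          rwa [hGe, Finset.union_empty] at this
        have : ((Finset.univ.filter (fun i => x i ≠ 0)).card : ℝ) ≤ k :=
          le_trans (Nat.cast_le.mpr this) hFcard
        exact_mod_cast this
      · -- G singleton
        obtain ⟨j, hj⟩ := Finset.card_eq_one.mp hGc
        have hjmem : j ∈ G := by simp [hj]
        simp only [hG, Finset.mem_filter, Finset.mem_univ, true_and] at hjmem
        have hdisjFG : Disjoint F G := by
          rw [Finset.disjoint_left]
          intro a haF haG
          simp only [hF, Finset.mem_filter, Finset.mem_univ, true_and] at haF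
          simp only [hG, Finset.mem_filter, Finset.mem_univ, true_and] at haG
          exact absurd haF (ne_of_lt haG.2)
        have hsum2 : ∑ i ∈ F ∪ G, |x i| = F.card * α + |x j| := by
          rw [Finset.sum_union hdisjFG, hFsum, hj, Finset.sum_singleton]
        have hle2 : ∑ i ∈ F ∪ G, |x i| ≤ ∑ i, |x i| :=
          Finset.sum_le_sum_of_subset_of_nonneg (Finset.subset_univ _)
            (fun i _ _ => abs_nonneg _)
        have hFlt : (F.card : ℝ) * α < k * α := by
          have := hsum2 ▸ (hle2.trans h1)
          linarith [hjmem.1]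
        have hFk : F.card < k := by
          exact_mod_cast lt_of_mul_lt_mul_right hFlt hα.le
        have hcard2 : (Finset.univ.filter (fun i => x i ≠ 0)).card ≤ F.card + 1 := by
          calc (Finset.univ.filter (fun i => x i ≠ 0)).card ≤ (F ∪ G).card :=
                Finset.card_le_card hsub
            _ ≤ F.card + G.card := Finset.card_union_le _ _
            _ = F.card + 1 := by rw [hGc]
        omega
  intro N
  induction N with
  | zero =>
    intro x hinf h1 hT hcnt
    by_cases hs : (Finset.univ.filter (fun i => x i ≠ 0)).card ≤ k
    · exact direct x hinf h1 hT hs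
    · exfalso
      obtain ⟨i, j, hij, hi, hj⟩ := twostrict x hinf h1 hs
      have : i ∈ Finset.univ.filter (fun i => 0 < |x i| ∧ |x i| < α) :=
        Finset.mem_filter.mpr ⟨Finset.mem_univ _, hi⟩
      have hpos : 0 < (Finset.univ.filter (fun i => 0 < |x i| ∧ |x i| < α)).card :=
        Finset.card_pos.mpr ⟨i, this⟩
      omega
  | succ N ih =>
    intro x hinf h1 hT hcnt
    by_cases hs : (Finset.univ.filter (fun i => x i ≠ 0)).card ≤ k
    · exact direct x hinf h1 hT hs
    obtain ⟨i, j, hij, hi, hj⟩ := twostrict x hinf h1 hs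
    have hxi : x i ≠ 0 := abs_pos.mp hi.1
    have hxj : x j ≠ 0 := abs_pos.mp hj.1
    set d : Fin p → ℝ :=
      fun l => if l = i then Real.sign (x i) else if l = j then -Real.sign (x j) else 0 with hd
    set ep := min (α - |x i|) (|x j|) with hep_def
    set em := min (|x i|) (α - |x j|) with hem_def
    have hep : 0 < ep := lt_min (by linarith [hi.2]) hj.1
    have hem : 0 < em := lt_min hi.1 (by linarith [hj.2])
    set xp : Fin p → ℝ := fun l => x l + ep * d l with hxp
    set xm : Fin p → ℝ := fun l => x l - em * d l with hxm
    have hdi : d i = Real.sign (x i) := by simp [hd]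
    have hdj : d j = -Real.sign (x j) := by simp [hd, hij.symm]
    have hdo : ∀ l, l ≠ i → l ≠ j → d l = 0 := fun l h1' h2' => by simp [hd, h1', h2']
    -- coordinates of xp
    have hxpi : |xp i| = |x i| + ep := by
      rw [hxp]; simp only [hdi]; exact abs_add_mul_sign hxi hep.le
    have hxpj : |xp j| = |x j| - ep := by
      have : xp j = x j - ep * Real.sign (x j) := by rw [hxp]; simp only [hdj]; ring
      rw [this]; exact abs_sub_mul_sign hep.le (min_le_right _ _)
    have hxpo : ∀ l, l ≠ i → l ≠ j → xp l = x l := fun l h1' h2' => by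
      rw [hxp]; simp [hdo l h1' h2']
    -- coordinates of xm
    have hxmi : |xm i| = |x i| - em := by
      have : xm i = x i - em * Real.sign (x i) := by rw [hxm]; simp only [hdi]
      rw [this]; exact abs_sub_mul_sign hem.le (min_le_left _ _)
    have hxmj : |xm j| = |x j| + em := by
      have : xm j = x j + em * Real.sign (x j) := by rw [hxm]; simp only [hdj]; ring
      rw [this]; exact abs_add_mul_sign hxj hem.le
    have hxmo : ∀ l, l ≠ i → l ≠ j → xm l = x l := fun l h1' h2' => by
      rw [hxm]; simp [hdo l h1' h2']
    have hiT : i ∉ T₀ := fun h => hxi (hT i h)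
    have hjT : j ∉ T₀ := fun h => hxj (hT j h)
    -- ℓ∞ bounds
    have hinfp : ∀ l, |xp l| ≤ α := by
      intro l
      by_cases h1' : l = i
      · subst h1'; rw [hxpi]; have := min_le_left (α - |x l|) (|x j|); linarith
      by_cases h2' : l = j
      · subst h2'; rw [hxpj]; linarith [hj.2, hep]
      · rw [hxpo l h1' h2']; exact hinf l
    have hinfm : ∀ l, |xm l| ≤ α := by
      intro l
      by_cases h1' : l = i
      · subst h1'; rw [hxmi]; linarith [hi.2, hem]
      by_cases h2' : l = j
      · subst h2'; rw [hxmj]; have := min_le_right (|x i|) (α - |x l|); linarith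
      · rw [hxmo l h1' h2']; exact hinf l
    -- ℓ₁ sums are preserved
    have hsum_aux : ∀ (y : Fin p → ℝ), (∀ l, l ≠ i → l ≠ j → y l = x l) →
        (∑ l, |y l|) = (∑ l, |x l|) + ((|y i| - |x i|) + (|y j| - |x j|)) := by
      intro y hy
      have : ∀ l, |y l| = |x l| +
          ((if l = i then |y i| - |x i| else 0) + (if l = j then |y j| - |x j| else 0)) := by
        intro l
        by_cases h1' : l = i
        · subst h1'; rw [if_pos rfl, if_neg hij]; ring
        by_cases h2' : l = j
        · subst h2'; rw [if_neg h1', if_pos rfl]; ring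
        · rw [if_neg h1', if_neg h2', hy l h1' h2']; ring
      rw [Finset.sum_congr rfl (fun l _ => this l)]
      rw [Finset.sum_add_distrib, Finset.sum_add_distrib,
        Finset.sum_ite_eq' Finset.univ i (fun _ => |y i| - |x i|),
        Finset.sum_ite_eq' Finset.univ j (fun _ => |y j| - |x j|)]
      simp
    have h1p : (∑ l, |xp l|) ≤ k * α := by
      rw [hsum_aux xp hxpo, hxpi, hxpj]; linarith
    have h1m : (∑ l, |xm l|) ≤ k * α := by
      rw [hsum_aux xm hxmo, hxmi, hxmj]; linarith
    -- zero on T₀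
    have hTp : ∀ l ∈ T₀, xp l = 0 := by
      intro l hl
      rw [hxpo l (fun h => hiT (h ▸ hl)) (fun h => hjT (h ▸ hl))]
      exact hT l hl
    have hTm : ∀ l ∈ T₀, xm l = 0 := by
      intro l hl
      rw [hxmo l (fun h => hiT (h ▸ hl)) (fun h => hjT (h ▸ hl))]
      exact hT l hl
    -- strict sets shrink
    have hmemi : i ∈ Finset.univ.filter (fun l => 0 < |x l| ∧ |x l| < α) :=
      Finset.mem_filter.mpr ⟨Finset.mem_univ _, hi⟩
    have hmemj : j ∈ Finset.univ.filter (fun l => 0 < |x l| ∧ |x l| < α) :=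
      Finset.mem_filter.mpr ⟨Finset.mem_univ _, hj⟩
    have hshrink : ∀ (y : Fin p → ℝ), (∀ l, l ≠ i → l ≠ j → y l = x l) →
        ((¬(0 < |y i| ∧ |y i| < α)) ∨ (¬(0 < |y j| ∧ |y j| < α))) →
        (0 < |y i| ∧ |y i| < α → 0 < |x i| ∧ |x i| < α) →
        (0 < |y j| ∧ |y j| < α → 0 < |x j| ∧ |x j| < α) →
        (Finset.univ.filter (fun l => 0 < |y l| ∧ |y l| < α)).card ≤ N := by
      intro y hy hcase hyi hyj
      rcases hcase with hc | hc
      · have hsub2 : (Finset.univ.filter (fun l => 0 < |y l| ∧ |y l| < α)) ⊆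
            (Finset.univ.filter (fun l => 0 < |x l| ∧ |x l| < α)).erase i := by
          intro l hl
          simp only [Finset.mem_filter, Finset.mem_univ, true_and] at hl
          have hli : l ≠ i := fun h => hc (h ▸ hl)
          apply Finset.mem_erase.mpr
          refine ⟨hli, ?_⟩
          by_cases h2' : l = j
          · subst h2'; simpa using hyj hl
          · rw [hy l hli h2'] at hl; simpa using hl
        calc (Finset.univ.filter (fun l => 0 < |y l| ∧ |y l| < α)).card
            ≤ ((Finset.univ.filter (fun l => 0 < |x l| ∧ |x l| < α)).erase i).card :=
              Finset.card_le_card hsub2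
          _ = (Finset.univ.filter (fun l => 0 < |x l| ∧ |x l| < α)).card - 1 :=
              Finset.card_erase_of_mem hmemi
          _ ≤ N := by omega
      · have hsub2 : (Finset.univ.filter (fun l => 0 < |y l| ∧ |y l| < α)) ⊆
            (Finset.univ.filter (fun l => 0 < |x l| ∧ |x l| < α)).erase j := by
          intro l hl
          simp only [Finset.mem_filter, Finset.mem_univ, true_and] at hl
          have hlj : l ≠ j := fun h => hc (h ▸ hl)
          apply Finset.mem_erase.mpr
          refine ⟨hlj, ?_⟩
          by_cases h1' : l = i
          · subst h1'; simpa using hyi hl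
          · rw [hy l h1' hlj] at hl; simpa using hl
        calc (Finset.univ.filter (fun l => 0 < |y l| ∧ |y l| < α)).card
            ≤ ((Finset.univ.filter (fun l => 0 < |x l| ∧ |x l| < α)).erase j).card :=
              Finset.card_le_card hsub2
          _ = (Finset.univ.filter (fun l => 0 < |x l| ∧ |x l| < α)).card - 1 :=
              Finset.card_erase_of_mem hmemj
          _ ≤ N := by omega
    have hcntp : (Finset.univ.filter (fun l => 0 < |xp l| ∧ |xp l| < α)).card ≤ N := by
      apply hshrink xp hxpo
      · rcases le_total (α - |x i|) (|x j|) with hc | hc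
        · left; intro hcon; rw [hxpi] at hcon
          have h5 : ep = α - |x i| := hep_def.trans (min_eq_left hc)
          linarith [hcon.2]
        · right; intro hcon; rw [hxpj] at hcon
          have h5 : ep = |x j| := hep_def.trans (min_eq_right hc)
          linarith [hcon.1]
      · intro _; exact hi
      · intro hcon; rw [hxpj] at hcon
        exact ⟨by linarith [hcon.1, hep], by linarith [hj.2]⟩
    have hcntm : (Finset.univ.filter (fun l => 0 < |xm l| ∧ |xm l| < α)).card ≤ N := by
      apply hshrink xm hxmo
      · rcases le_total (|x i|) (α - |x j|) with hc | hc
        · left; intro hcon; rw [hxmi] at hcon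
          have h5 : em = |x i| := hem_def.trans (min_eq_left hc)
          linarith [hcon.1]
        · right; intro hcon; rw [hxmj] at hcon
          have h5 : em = α - |x j| := hem_def.trans (min_eq_right hc)
          linarith [hcon.2]
      · intro hcon; rw [hxmi] at hcon
        exact ⟨by linarith [hcon.1, hem], by linarith [hi.2]⟩
      · intro _; exact hj
    have hboundp := ih xp hinfp h1p hTp hcntp
    have hboundm := ih xm hinfm h1m hTm hcntm
    -- linearity of the functional
    have hcomb : em • xp + ep • xm = (em + ep) • x := by
      funext l
      simp only [Pi.add_apply, Pi.smul_apply, smul_eq_mul, hxp, hxm]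
      ring
    have hlin : (em + ep) * dotProduct (Φ.mulVec x) (Φ.mulVec x₀) =
        em * dotProduct (Φ.mulVec xp) (Φ.mulVec x₀) +
        ep * dotProduct (Φ.mulVec xm) (Φ.mulVec x₀) := by
      have e1 := dot_lin Φ (Φ.mulVec x₀) em ep xp xm
      rw [hcomb] at e1
      rw [Matrix.mulVec_smul, smul_dotProduct, smul_eq_mul] at e1
      exact e1
    have hfin : (em + ep) * (-(dotProduct (Φ.mulVec x) (Φ.mulVec x₀))) ≤
        (em + ep) * (θ * l2 x₀ * (Real.sqrt k * α)) := by
      have h1' := mul_le_mul_of_nonneg_left hboundp hem.le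
      have h2' := mul_le_mul_of_nonneg_left hboundm hep.le
      calc (em + ep) * (-(dotProduct (Φ.mulVec x) (Φ.mulVec x₀)))
          = em * (-(dotProduct (Φ.mulVec xp) (Φ.mulVec x₀))) +
            ep * (-(dotProduct (Φ.mulVec xm) (Φ.mulVec x₀))) := by
            linarith [hlin]
        _ ≤ em * (θ * l2 x₀ * (Real.sqrt k * α)) + ep * (θ * l2 x₀ * (Real.sqrt k * α)) :=
            add_le_add h1' h2'
        _ = (em + ep) * (θ * l2 x₀ * (Real.sqrt k * α)) := by ring
    exact le_of_mul_le_mul_left hfin (by linarith)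

set_option maxHeartbeats 1000000 in
theorem exact_sparse_recovery
    {n p k : ℕ} (Φ : Matrix (Fin n) (Fin p) ℝ) (δ θ : ℝ)
    (hδ0 : 0 ≤ δ) (hθ0 : 0 ≤ θ)
    (hδ : ∀ c : Fin p → ℝ, Sparse k c →
      Real.sqrt (1 - δ) * l2 c ≤ l2 (Φ.mulVec c) ∧
      l2 (Φ.mulVec c) ≤ Real.sqrt (1 + δ) * l2 c)
    (hθ : ∀ c c' : Fin p → ℝ, Sparse k c → Sparse k c' → (∀ i, c i = 0 ∨ c' i = 0) →
      |dotProduct (Φ.mulVec c) (Φ.mulVec c')| ≤ θ * l2 c * l2 c')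
    (hcond : δ + θ < 1)
    (β : Fin p → ℝ) (hβ : Sparse k β)
    (βhat : Fin p → ℝ) (hfeas : Φ.mulVec βhat = Φ.mulVec β)
    (hmin : ∀ γ : Fin p → ℝ, Φ.mulVec γ = Φ.mulVec β → l1 βhat ≤ l1 γ) :
    βhat = β := by
  set h : Fin p → ℝ := fun i => βhat i - β i with hh
  suffices hz : ∀ i, h i = 0 by
    funext i
    have := hz i
    simp only [hh] at this
    linarith
  have hΦh : Φ.mulVec h = 0 := by
    have e : h = βhat - β := rfl
    rw [e, Matrix.mulVec_sub, hfeas, sub_self]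
  have hδ1 : δ < 1 := by linarith
  -- trivial case k = 0
  rcases Nat.eq_zero_or_pos k with hk0 | hk
  · obtain ⟨S, hScard, hS0⟩ := hβ
    have hSe : S = ∅ := Finset.card_eq_zero.mp (by omega)
    have hβ0 : ∀ i, β i = 0 := fun i => hS0 i (by simp [hSe])
    have hl1β : l1 β = 0 := by unfold l1; exact Finset.sum_eq_zero fun i _ => by simp [hβ0 i]
    have hble := hmin β rfl
    rw [hl1β] at hble
    intro i
    have h2 : |βhat i| ≤ l1 βhat := by
      unfold l1
      exact Finset.single_le_sum (f := fun j => |βhat j|) (fun j _ => abs_nonneg _) (Finset.mem_univ i)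
    have h4 : |βhat i| ≤ 0 := le_trans h2 hble
    have h3 : βhat i = 0 := abs_eq_zero.mp (le_antisymm h4 (abs_nonneg _))
    simp [hh, h3, hβ0 i]
  rcases lt_or_ge p k with hpk | hkp
  · -- p < k : everything is k-sparse
    have hsp : Sparse k h := ⟨Finset.univ, by simpa using hpk.le, fun i hi => absurd (Finset.mem_univ i) hi⟩
    have hr := (hδ h hsp).1
    have hz2 : l2 (Φ.mulVec h) = 0 := by
      rw [hΦh]; unfold l2; simp
    rw [hz2] at hr
    have hsq : Real.sqrt (1 - δ) > 0 := Real.sqrt_pos.mpr (by linarith)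
    have hl2h : l2 h ≤ 0 := by
      by_contra hcon
      push_neg at hcon
      nlinarith [hr, hsq, hcon]
    have hsum0 : (∑ i, (h i)^2) = 0 := by
      have h4 : 0 ≤ ∑ i, (h i)^2 := Finset.sum_nonneg fun i _ => sq_nonneg _
      have h5 : Real.sqrt (∑ i, (h i)^2) = 0 := le_antisymm hl2h (Real.sqrt_nonneg _)
      have := Real.sqrt_eq_zero'.mp h5
      linarith
    intro i
    have := (Finset.sum_eq_zero_iff_of_nonneg (fun i _ => sq_nonneg (h i))).mp hsum0 i (Finset.mem_univ i)
    exact pow_eq_zero_iff (by norm_num) |>.mp this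
  -- main case : 1 ≤ k ≤ p
  have hpcard : k ≤ Fintype.card (Fin p) := by simpa using hkp
  -- choose T₀ of cardinality k maximizing ∑_{T₀} |h|
  obtain ⟨t0, _, ht0card⟩ := Finset.exists_subset_card_eq
    (show k ≤ (Finset.univ : Finset (Fin p)).card by simpa using hkp)
  obtain ⟨T₀, hT₀mem, hT₀max⟩ := Finset.exists_max_image
    ((Finset.univ : Finset (Fin p)).powerset.filter (fun t => t.card = k))
    (fun t => ∑ i ∈ t, |h i|)
    ⟨t0, Finset.mem_filter.mpr ⟨Finset.mem_powerset.mpr (Finset.subset_univ _), ht0card⟩⟩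
  have hcard : T₀.card = k := (Finset.mem_filter.mp hT₀mem).2
  have hmax : ∀ t : Finset (Fin p), t.card = k → (∑ i ∈ t, |h i|) ≤ ∑ i ∈ T₀, |h i| :=
    fun t ht => hT₀max t (Finset.mem_filter.mpr ⟨Finset.mem_powerset.mpr (Finset.subset_univ _), ht⟩)
  set A := ∑ i ∈ T₀, |h i| with hA_def
  have hA0 : 0 ≤ A := Finset.sum_nonneg fun i _ => abs_nonneg _
  -- swap bound : off-support entries dominated by on-support entries
  have hswap : ∀ i ∉ T₀, ∀ j ∈ T₀, |h i| ≤ |h j| := by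
    intro i hiT j hjT
    have hnem : i ∉ T₀.erase j := fun hmem => hiT (Finset.mem_of_mem_erase hmem)
    have hins : (insert i (T₀.erase j)).card = k := by
      rw [Finset.card_insert_of_notMem hnem, Finset.card_erase_of_mem hjT, hcard]
      omega
    have h2 := hmax _ hins
    rw [Finset.sum_insert hnem] at h2
    have h3 := Finset.sum_erase_add T₀ (fun l => |h l|) hjT
    linarith [hA_def, h2, h3]
  have hlinf : ∀ i ∉ T₀, (k : ℝ) * |h i| ≤ A := by
    intro i hiT
    have h2 : ∑ _j ∈ T₀, |h i| ≤ ∑ j ∈ T₀, |h j| :=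
      Finset.sum_le_sum fun j hj => hswap i hiT j hj
    rw [Finset.sum_const, hcard, nsmul_eq_mul] at h2
    exact h2
  -- cone condition from ℓ¹ minimality
  obtain ⟨S, hScard, hS0⟩ := hβ
  have hβh : ∀ i, βhat i = β i + h i := fun i => by simp [hh]
  have hminβ := hmin β rfl
  have hcone : (∑ i ∈ Sᶜ, |h i|) ≤ ∑ i ∈ S, |h i| := by
    have e1 : l1 β = ∑ i ∈ S, |β i| := by
      unfold l1
      rw [← Finset.sum_add_sum_compl S]
      have e0 : (∑ i ∈ Sᶜ, |β i|) = 0 :=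
        Finset.sum_eq_zero fun i hi => by rw [hS0 i (Finset.mem_compl.mp hi)]; simp
      rw [e0, add_zero]
    have e2 : l1 βhat = (∑ i ∈ S, |β i + h i|) + ∑ i ∈ Sᶜ, |h i| := by
      unfold l1
      rw [← Finset.sum_add_sum_compl S]
      congr 1
      · exact Finset.sum_congr rfl fun i _ => by rw [hβh i]
      · exact Finset.sum_congr rfl fun i hi => by
          rw [hβh i, hS0 i (Finset.mem_compl.mp hi), zero_add]
    have e3 : (∑ i ∈ S, |β i|) - (∑ i ∈ S, |h i|) ≤ ∑ i ∈ S, |β i + h i| := by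
      rw [← Finset.sum_sub_distrib]
      refine Finset.sum_le_sum fun i _ => ?_
      have h4 : |β i| ≤ |β i + h i| + |h i| := by
        have := abs_add_le (β i + h i) (-(h i))
        simpa using this
      linarith
    rw [e1, e2] at hminβ
    linarith
  have hSA : (∑ i ∈ S, |h i|) ≤ A := by
    obtain ⟨S', hSS', hS'card⟩ := Finset.exists_superset_card_eq hScard hpcard
    calc (∑ i ∈ S, |h i|) ≤ ∑ i ∈ S', |h i| :=
          Finset.sum_le_sum_of_subset_of_nonneg hSS' fun _ _ _ => abs_nonneg _
      _ ≤ A := hmax S' hS'card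
  have hcompA : (∑ i ∈ T₀ᶜ, |h i|) ≤ A := by
    have t1 := Finset.sum_add_sum_compl T₀ (fun i => |h i|)
    have t2 := Finset.sum_add_sum_compl S (fun i => |h i|)
    linarith [hA_def, t1, t2, hcone, hSA]
  -- conclude A = 0, hence h = 0
  have hAz : A ≤ 0 := by
    by_contra hcon
    push_neg at hcon
    have hkR : (0 : ℝ) < k := by exact_mod_cast hk
    set α := A / k with hα_def
    have hα : 0 < α := div_pos hcon hkR
    set x₀ : Fin p → ℝ := fun i => if i ∈ T₀ then h i else 0 with hx₀_def
    set v : Fin p → ℝ := fun i => if i ∈ T₀ then 0 else h i with hv_def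
    have hx₀0 : ∀ i ∉ T₀, x₀ i = 0 := fun i hi => by simp [hx₀_def, hi]
    have hvT : ∀ i ∈ T₀, v i = 0 := fun i hi => by simp [hv_def, hi]
    have hvinf : ∀ i, |v i| ≤ α := by
      intro i
      by_cases hi : i ∈ T₀
      · simp [hv_def, hi, hα.le]
      · have := hlinf i hi
        rw [hv_def]
        simp only [hi, if_false]
        rw [hα_def, le_div_iff₀ hkR]
        linarith
    have hvsum : (∑ i, |v i|) ≤ k * α := by
      have e4 : (∑ i, |v i|) = ∑ i ∈ T₀ᶜ, |h i| := by
        rw [← Finset.sum_add_sum_compl T₀ (fun i => |v i|)]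
        have z1 : (∑ i ∈ T₀, |v i|) = 0 :=
          Finset.sum_eq_zero fun i hi => by rw [hvT i hi]; simp
        have z2 : (∑ i ∈ T₀ᶜ, |v i|) = ∑ i ∈ T₀ᶜ, |h i| :=
          Finset.sum_congr rfl fun i hi => by
            rw [hv_def]; simp [Finset.mem_compl.mp hi]
        rw [z1, z2, zero_add]
      rw [e4, hα_def, mul_div_cancel₀ _ (ne_of_gt hkR)]
      exact hcompA
    have hcnt : ((Finset.univ : Finset (Fin p)).filter (fun i => 0 < |v i| ∧ |v i| < α)).card ≤ p := by
      calc _ ≤ (Finset.univ : Finset (Fin p)).card := Finset.card_le_card (Finset.filter_subset _ _)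
        _ = p := by simp
    have hKB := key_bound Φ θ hθ0 hθ x₀ T₀ hcard hx₀0 α hα p v hvinf hvsum hvT hcnt
    -- the quadratic form identity
    have hadd : x₀ + v = h := by
      funext i
      by_cases hi : i ∈ T₀ <;> simp [hx₀_def, hv_def, hi]
    have hD0 : dotProduct (Φ.mulVec x₀) (Φ.mulVec x₀) +
        dotProduct (Φ.mulVec v) (Φ.mulVec x₀) = 0 := by
      rw [← add_dotProduct, ← Matrix.mulVec_add, hadd, hΦh, zero_dotProduct]
    set B := l2 x₀ with hB_def
    have hB0 : 0 ≤ B := l2_nonneg x₀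
    have hBsq : B^2 = ∑ i ∈ T₀, (h i)^2 := by
      have e5 : (∑ i, (x₀ i)^2) = ∑ i ∈ T₀, (h i)^2 := by
        rw [← Finset.sum_add_sum_compl T₀ (fun i => (x₀ i)^2)]
        have z1 : (∑ i ∈ T₀ᶜ, (x₀ i)^2) = 0 :=
          Finset.sum_eq_zero fun i hi => by
            rw [hx₀0 i (Finset.mem_compl.mp hi)]; simp
        have z2 : (∑ i ∈ T₀, (x₀ i)^2) = ∑ i ∈ T₀, (h i)^2 :=
          Finset.sum_congr rfl fun i hi => by rw [hx₀_def]; simp [hi]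
        rw [z1, z2, add_zero]
      rw [hB_def]
      unfold l2
      rw [Real.sq_sqrt (Finset.sum_nonneg fun i _ => sq_nonneg _), e5]
    have hABk : A^2 ≤ k * B^2 := by
      have hc := sq_sum_le_card_mul_sum_sq (s := T₀) (f := fun i => |h i|)
      rw [hcard] at hc
      have e6 : (∑ i ∈ T₀, |h i|^2) = ∑ i ∈ T₀, (h i)^2 :=
        Finset.sum_congr rfl fun i _ => sq_abs _
      rw [e6] at hc
      rw [hBsq]
      exact_mod_cast hc
    have hsk : Real.sqrt k * Real.sqrt k = (k : ℝ) :=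
      Real.mul_self_sqrt (by positivity)
    have hsk0 : 0 < Real.sqrt k := Real.sqrt_pos.mpr hkR
    have hAB : A ≤ Real.sqrt k * B := by
      by_contra hc2
      push_neg at hc2
      have hgt : 0 ≤ Real.sqrt k * B := mul_nonneg hsk0.le hB0
      nlinarith [hABk, hsk, hc2, hgt]
    have hskα : Real.sqrt k * α ≤ B := by
      have e : Real.sqrt k * α * k = Real.sqrt k * A := by
        rw [hα_def]; field_simp
      have h10 : Real.sqrt k * A ≤ Real.sqrt k * (Real.sqrt k * B) :=
        mul_le_mul_of_nonneg_left hAB hsk0.le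
      nlinarith [e, h10, hsk, hkR]
    -- RIP lower bound
    have hsx₀ : Sparse k x₀ := ⟨T₀, hcard.le, hx₀0⟩
    have hRIP := (hδ x₀ hsx₀).1
    have hl2Φ : l2 (Φ.mulVec x₀) = Real.sqrt (dotProduct (Φ.mulVec x₀) (Φ.mulVec x₀)) := by
      unfold l2 dotProduct
      congr 1
      exact Finset.sum_congr rfl fun i _ => pow_two _
    have hDnn : 0 ≤ dotProduct (Φ.mulVec x₀) (Φ.mulVec x₀) := by
      unfold dotProduct
      exact Finset.sum_nonneg fun i _ => mul_self_nonneg _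
    have hlow : (1 - δ) * B^2 ≤ dotProduct (Φ.mulVec x₀) (Φ.mulVec x₀) := by
      have h6 : Real.sqrt (1 - δ) * B ≤ Real.sqrt (dotProduct (Φ.mulVec x₀) (Φ.mulVec x₀)) := by
        rw [← hl2Φ]; exact hRIP
      have h7 : 0 ≤ Real.sqrt (1 - δ) * B := by positivity
      have h8 := mul_self_le_mul_self h7 h6
      rw [Real.mul_self_sqrt hDnn] at h8
      nlinarith [Real.sq_sqrt (show (0:ℝ) ≤ 1 - δ by linarith), h8]
    -- combine everything
    have hup : dotProduct (Φ.mulVec x₀) (Φ.mulVec x₀) ≤ θ * B * B := by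
      have h9 : dotProduct (Φ.mulVec x₀) (Φ.mulVec x₀) =
          -(dotProduct (Φ.mulVec v) (Φ.mulVec x₀)) := by linarith [hD0]
      rw [h9]
      calc -(dotProduct (Φ.mulVec v) (Φ.mulVec x₀)) ≤ θ * l2 x₀ * (Real.sqrt k * α) := hKB
        _ ≤ θ * B * B := by
            rw [← hB_def]
            exact mul_le_mul_of_nonneg_left hskα (by positivity)
    have hBpos : 0 < B := by
      rcases lt_or_eq_of_le hB0 with hlt | heq
      · exact hlt
      · exfalso; rw [← heq, mul_zero] at hAB; linarith
    nlinarith [hlow, hup, hBpos, mul_pos hBpos hBpos, hcond]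
  -- A = 0 gives h = 0
  have hAeq : A = 0 := le_antisymm hAz hA0
  intro i
  by_cases hiT : i ∈ T₀
  · have h2 : |h i| ≤ A := by
      rw [hA_def]
      exact Finset.single_le_sum (f := fun j => |h j|) (fun j _ => abs_nonneg _) hiT
    have := abs_nonneg (h i)
    exact abs_eq_zero.mp (by linarith)
  · have h2 := hlinf i hiT
    have hkR : (0 : ℝ) < k := by exact_mod_cast hk
    have := abs_nonneg (h i)
    have h3 : |h i| ≤ 0 := by nlinarith
    exact abs_eq_zero.mp (le_antisymm h3 (abs_nonneg _))
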